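/- Let {(Xᵢ,Yᵢ)} be i.i.d. bivariate Sarmanov vectors with lim φ₁ = d₁, X ≥ 0, F ∈ 𝒟, G̅(x) = o(F̅(x)), ∫H̃(v)G(dv) < ∞ where H̃(v) = sup_{x>0} P[XY > x/v]/P[XY > x], E[Y^{α+ε}] < ∞ for some ε > 0, and suppose P[XY > x] ≤ W(x) for all x > 0 where W is a bounded regularly varying function with index −α. Then for all 1 ≤ s < t ≤ n, P[X_s∏_{i=1}^s Yᵢ > x, X_t∏_{i=1}^t Yᵢ > x] = o(W(x)) as x → ∞. -/

import Mathlib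

open MeasureTheory Set Filter Finset

private lemma indep_of_finsets {Ω : Type*} [MeasurableSpace Ω] {P : Measure Ω}
    {pr : ℕ → Ω → ℝ × ℝ} (hpr : ∀ i, Measurable (pr i))
    (hiid : ProbabilityTheory.iIndepFun pr P)
    (S T : Finset ℕ) (hST : Disjoint S T)
    (f : (↥S → ℝ × ℝ) → ℝ) (g : (↥T → ℝ × ℝ) → ℝ)
    (hf : Measurable f) (hg : Measurable g) :
    ProbabilityTheory.IndepFun (fun ω => f (fun i => pr i ω)) (fun ω => g (fun i => pr i ω)) P :=
  (hiid.indepFun_finset S T hST hpr).comp hf hg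

/-- For i.i.d. bivariate Sarmanov vectors, with moment conditions and the tail of the
generic product dominated by a bounded regularly varying function `W` of index `-α`,
the joint tails of the discounted terms are `o(W(x))`. -/
theorem pairwise_joint_tail_negligible
    {Ω : Type*} [MeasurableSpace Ω] (P : Measure Ω) [IsProbabilityMeasure P]
    (X Y : ℕ → Ω → ℝ)
    (hX : ∀ i, Measurable (X i)) (hY : ∀ i, Measurable (Y i))
    (hXnn : ∀ i ω, 0 ≤ X i ω) (hYpos : ∀ i ω, 0 < Y i ω)
    (φ₁ φ₂ : ℝ → ℝ) (hφ₁ : Measurable φ₁) (hφ₂ : Measurable φ₂) (θ d₁ b₁ b₂ : ℝ)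
    (hb₁ : ∀ x, |φ₁ x| ≤ b₁) (hb₂ : ∀ y, |φ₂ y| ≤ b₂)
    (hd₁ : Tendsto φ₁ atTop (nhds d₁))
    (hmean1 : ∫ ω, φ₁ (X 1 ω) ∂P = 0) (hmean2 : ∫ ω, φ₂ (Y 1 ω) ∂P = 0)
    -- i.i.d. pairs with generic Sarmanov joint law
    (hiid : ProbabilityTheory.iIndepFun
      (fun i ω => (X i ω, Y i ω)) P)
    (hid : ∀ i, P.map (fun ω => (X i ω, Y i ω)) = P.map (fun ω => (X 1 ω, Y 1 ω)))
    (hjoint : P.map (fun ω => (X 1 ω, Y 1 ω)) =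
      ((P.map (X 1)).prod (P.map (Y 1))).withDensity
        (fun p => ENNReal.ofReal (1 + θ * φ₁ p.1 * φ₂ p.2)))
    -- F ∈ 𝒟
    (hD : ∀ y : ℝ, 0 < y → y < 1 →
      ∃ C : ℝ, ∀ᶠ x in atTop,
        (P {ω | X 1 ω > x * y}).toReal ≤ C * (P {ω | X 1 ω > x}).toReal)
    -- Ḡ = o(F̄)
    (hGF : (fun x => (P {ω | Y 1 ω > x}).toReal) =o[atTop]
      fun x => (P {ω | X 1 ω > x}).toReal)
    -- ∫ H̃ dG < ∞
    (Htilde : ℝ → ℝ)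
    (hHt : ∀ v : ℝ, 0 < v → Htilde v =
      sSup {r : ℝ | ∃ x : ℝ, 0 < x ∧
        r = (P {ω | X 1 ω * Y 1 ω > x / v}).toReal / (P {ω | X 1 ω * Y 1 ω > x}).toReal})
    (hHtBdd : ∀ v : ℝ, 0 < v → BddAbove {r : ℝ | ∃ x : ℝ, 0 < x ∧
        r = (P {ω | X 1 ω * Y 1 ω > x / v}).toReal / (P {ω | X 1 ω * Y 1 ω > x}).toReal})
    (hHtInt : ∫⁻ v, ENNReal.ofReal (Htilde v) ∂(P.map (Y 1)) < ⊤)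
    -- moment condition
    (α ε : ℝ) (hα : 0 < α) (hε : 0 < ε)
    (hmom : Integrable (fun ω => Y 1 ω ^ (α + ε)) P)
    -- W : bounded regularly varying dominator of the tail of XY
    (W : ℝ → ℝ) (hWpos : ∀ x > (0:ℝ), 0 < W x)
    (hWbdd : ∃ B : ℝ, ∀ x > (0:ℝ), W x ≤ B)
    (hWRV : ∀ l : ℝ, 0 < l →
      Tendsto (fun x => W (l * x) / W x) atTop (nhds (l ^ (-α))))
    (hdom : ∀ x > (0:ℝ), (P {ω | X 1 ω * Y 1 ω > x}).toReal ≤ W x) :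
    ∀ s t : ℕ, 1 ≤ s → s < t →
      (fun x => (P {ω | X s ω * ∏ i ∈ Finset.Icc 1 s, Y i ω > x ∧
        X t ω * ∏ i ∈ Finset.Icc 1 t, Y i ω > x}).toReal) =o[atTop] W := by
  intro s t hs hst
  classical
  obtain ⟨m, rfl⟩ : ∃ m, t = m + 1 := ⟨t - 1, by omega⟩
  have hsm : s ≤ m := by omega
  -- basic measurability facts
  have hpm : ∀ i, Measurable (fun ω => (X i ω, Y i ω)) := fun i => (hX i).prodMk (hY i)
  have hSxy : ∀ u : ℝ, MeasurableSet {p : ℝ × ℝ | p.1 * p.2 > u} :=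
    fun u => measurableSet_lt measurable_const (measurable_fst.mul measurable_snd)
  have hSx : ∀ u : ℝ, MeasurableSet {p : ℝ × ℝ | p.1 > u} :=
    fun u => measurableSet_lt measurable_const measurable_fst
  have hSy : ∀ u : ℝ, MeasurableSet {p : ℝ × ℝ | p.2 > u} :=
    fun u => measurableSet_lt measurable_const measurable_snd
  -- identical marginals
  have hmXY : ∀ (i : ℕ) (u : ℝ),
      P {ω | X i ω * Y i ω > u} = P {ω | X 1 ω * Y 1 ω > u} := by
    intro i u
    have h1 : {ω | X i ω * Y i ω > u}
        = (fun ω => (X i ω, Y i ω)) ⁻¹' {p : ℝ × ℝ | p.1 * p.2 > u} := rfl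
    rw [h1, ← Measure.map_apply (hpm i) (hSxy u), hid i,
      Measure.map_apply (hpm 1) (hSxy u)]
    rfl
  have hmX : ∀ (i : ℕ) (u : ℝ), P {ω | X i ω > u} = P {ω | X 1 ω > u} := by
    intro i u
    have h1 : {ω | X i ω > u}
        = (fun ω => (X i ω, Y i ω)) ⁻¹' {p : ℝ × ℝ | p.1 > u} := rfl
    rw [h1, ← Measure.map_apply (hpm i) (hSx u), hid i,
      Measure.map_apply (hpm 1) (hSx u)]
    rfl
  have hmY : ∀ (i : ℕ) (u : ℝ), P {ω | Y i ω > u} = P {ω | Y 1 ω > u} := by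
    intro i u
    have h1 : {ω | Y i ω > u}
        = (fun ω => (X i ω, Y i ω)) ⁻¹' {p : ℝ × ℝ | p.2 > u} := rfl
    rw [h1, ← Measure.map_apply (hpm i) (hSy u), hid i,
      Measure.map_apply (hpm 1) (hSy u)]
    rfl
  have hTne : ∀ u : ℝ, P {ω | X 1 ω * Y 1 ω > u} ≠ ⊤ := fun u => measure_ne_top P _
  by_cases hB : ∀ u : ℝ, 0 < u → P {ω | X 1 ω * Y 1 ω > u} ≠ 0
  · -- MAIN CASE: the tail of X₁Y₁ is everywhere positive
    have hTrpos : ∀ u : ℝ, 0 < u → 0 < (P {ω | X 1 ω * Y 1 ω > u}).toReal :=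
      fun u hu => ENNReal.toReal_pos (hB u hu) (hTne u)
    have hTanti : ∀ u w : ℝ, u ≤ w →
        P {ω | X 1 ω * Y 1 ω > w} ≤ P {ω | X 1 ω * Y 1 ω > u} :=
      fun u w huw => measure_mono (fun ω hω => lt_of_le_of_lt huw hω)
    -- the (modified) Htilde function
    set H' : ℝ → ℝ := fun v => if 0 < v then Htilde v else 0 with hH'def
    have hmem1 : ∀ v : ℝ, 0 < v → (1:ℝ) ∈ {r : ℝ | ∃ x : ℝ, 0 < x ∧
        r = (P {ω | X 1 ω * Y 1 ω > x / v}).toReal / (P {ω | X 1 ω * Y 1 ω > x}).toReal}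
        ∨ True := fun _ _ => Or.inr trivial
    have hne : ∀ v : ℝ, 0 < v → Set.Nonempty {r : ℝ | ∃ x : ℝ, 0 < x ∧
        r = (P {ω | X 1 ω * Y 1 ω > x / v}).toReal / (P {ω | X 1 ω * Y 1 ω > x}).toReal} :=
      fun v hv => ⟨_, ⟨1, one_pos, rfl⟩⟩
    have hH'nn : ∀ v : ℝ, 0 ≤ H' v := by
      intro v
      simp only [hH'def]
      by_cases hv : 0 < v
      · rw [if_pos hv, hHt v hv]
        refine le_trans ?_ (le_csSup (hHtBdd v hv) ⟨1, one_pos, rfl⟩)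
        positivity
      · rw [if_neg hv]
    have hRatio : ∀ v : ℝ, 0 < v → ∀ u : ℝ, 0 < u →
        (P {ω | X 1 ω * Y 1 ω > u / v}).toReal
          ≤ H' v * (P {ω | X 1 ω * Y 1 ω > u}).toReal := by
      intro v hv u hu
      have h1 : (P {ω | X 1 ω * Y 1 ω > u / v}).toReal
          / (P {ω | X 1 ω * Y 1 ω > u}).toReal ≤ H' v := by
        simp only [hH'def]
        rw [if_pos hv, hHt v hv]
        exact le_csSup (hHtBdd v hv) ⟨u, hu, rfl⟩
      calc (P {ω | X 1 ω * Y 1 ω > u / v}).toReal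
          = (P {ω | X 1 ω * Y 1 ω > u / v}).toReal
            / (P {ω | X 1 ω * Y 1 ω > u}).toReal
            * (P {ω | X 1 ω * Y 1 ω > u}).toReal := by
            rw [div_mul_cancel₀ _ (hTrpos u hu).ne']
        _ ≤ H' v * (P {ω | X 1 ω * Y 1 ω > u}).toReal :=
            mul_le_mul_of_nonneg_right h1 ENNReal.toReal_nonneg
    have hH'mono : Monotone H' := by
      intro v w hvw
      by_cases hv : 0 < v
      · have hw : 0 < w := lt_of_lt_of_le hv hvw
        have h2 : H' w = Htilde w := by simp only [hH'def]; exact if_pos hw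
        have h1 : H' v = Htilde v := by simp only [hH'def]; exact if_pos hv
        rw [h1, h2, hHt v hv, hHt w hw]
        refine csSup_le (hne v hv) ?_
        rintro r ⟨x, hx, rfl⟩
        have h3 : (P {ω | X 1 ω * Y 1 ω > x / v}).toReal
            ≤ (P {ω | X 1 ω * Y 1 ω > x / w}).toReal :=
          ENNReal.toReal_mono (hTne _)
            (hTanti _ _ (div_le_div_of_nonneg_left hx.le hv hvw))
        refine le_trans ?_ (le_csSup (hHtBdd w hw) ⟨x, hx, rfl⟩)
        exact div_le_div_of_nonneg_right h3 ENNReal.toReal_nonneg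
      · have h3 := hH'nn w
        have h4 : H' v = 0 := by simp only [hH'def]; exact if_neg hv
        rw [h4]; exact h3
    have hH'meas : Measurable H' := hH'mono.measurable
    have hH'one : H' 1 ≤ 1 := by
      simp only [hH'def]
      rw [if_pos one_pos, hHt 1 one_pos]
      refine csSup_le (hne 1 one_pos) ?_
      rintro r ⟨x, hx, rfl⟩
      rw [div_one, div_self (hTrpos x hx).ne']
    have hH'sub : ∀ v w : ℝ, 0 < v → 0 < w → H' (v * w) ≤ H' v * H' w := by
      intro v w hv hw
      have hvw : 0 < v * w := mul_pos hv hw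
      rw [show H' (v * w) = Htilde (v * w) from by simp only [hH'def]; exact if_pos hvw,
        hHt _ hvw]
      refine csSup_le (hne _ hvw) ?_
      rintro r ⟨x, hx, rfl⟩
      have h1 : x / (v * w) = (x / w) / v := by rw [div_div, mul_comm w v]
      have h2 : (P {ω | X 1 ω * Y 1 ω > x / (v * w)}).toReal
          ≤ H' v * (H' w * (P {ω | X 1 ω * Y 1 ω > x}).toReal) := by
        rw [h1]
        calc (P {ω | X 1 ω * Y 1 ω > x / w / v}).toReal
            ≤ H' v * (P {ω | X 1 ω * Y 1 ω > x / w}).toReal :=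
              hRatio v hv (x / w) (div_pos hx hw)
          _ ≤ H' v * (H' w * (P {ω | X 1 ω * Y 1 ω > x}).toReal) :=
              mul_le_mul_of_nonneg_left (hRatio w hw x hx) (hH'nn v)
      rw [div_le_iff₀ (hTrpos x hx)]
      calc (P {ω | X 1 ω * Y 1 ω > x / (v * w)}).toReal
          ≤ H' v * (H' w * (P {ω | X 1 ω * Y 1 ω > x}).toReal) := h2
        _ = H' v * H' w * (P {ω | X 1 ω * Y 1 ω > x}).toReal := by ring
    -- ENNReal versions
    set eH : ℝ → ENNReal := fun v => ENNReal.ofReal (H' v) with heHdef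
    have heHmeas : Measurable eH := hH'meas.ennreal_ofReal
    have hTbound : ∀ v : ℝ, 0 < v → ∀ u : ℝ, 0 < u →
        P {ω | X 1 ω * Y 1 ω > u / v} ≤ eH v * P {ω | X 1 ω * Y 1 ω > u} := by
      intro v hv u hu
      calc P {ω | X 1 ω * Y 1 ω > u / v}
          = ENNReal.ofReal (P {ω | X 1 ω * Y 1 ω > u / v}).toReal :=
            (ENNReal.ofReal_toReal (hTne _)).symm
        _ ≤ ENNReal.ofReal (H' v * (P {ω | X 1 ω * Y 1 ω > u}).toReal) :=
            ENNReal.ofReal_le_ofReal (hRatio v hv u hu)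
        _ = eH v * ENNReal.ofReal (P {ω | X 1 ω * Y 1 ω > u}).toReal := by
            rw [ENNReal.ofReal_mul (hH'nn v)]
        _ = eH v * P {ω | X 1 ω * Y 1 ω > u} := by
            rw [ENNReal.ofReal_toReal (hTne _)]
    -- Y's are iid
    have hYindep : ProbabilityTheory.iIndepFun Y P := by
      have h1 := hiid.comp (fun _ => Prod.snd) (fun _ => measurable_snd)
      exact h1
    have hYlaw : ∀ i : ℕ, P.map (Y i) = P.map (Y 1) := by
      intro i
      have h1 : P.map (Y i) = (P.map (fun ω => (X i ω, Y i ω))).map Prod.snd :=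
        (Measure.map_map measurable_snd (hpm i)).symm
      rw [h1, hid i, Measure.map_map measurable_snd (hpm 1)]
      rfl
    set I : ENNReal := ∫⁻ ω, eH (Y 1 ω) ∂P with hIdef
    have hIfin : I < ⊤ := by
      have h1 : I = ∫⁻ v, eH v ∂(P.map (Y 1)) := (lintegral_map heHmeas (hY 1)).symm
      have h2 : ∀ᵐ v ∂(P.map (Y 1)), eH v = ENNReal.ofReal (Htilde v) := by
        have hcompl : (P.map (Y 1)) {v : ℝ | ¬ 0 < v} = 0 := by
          have h3 : {v : ℝ | ¬ 0 < v} = Iic (0:ℝ) := by ext v; simp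
          rw [h3, Measure.map_apply (hY 1) measurableSet_Iic]
          have h4 : (Y 1) ⁻¹' (Iic 0) = ∅ := by
            ext ω; simp [not_le.mpr (hYpos 1 ω)]
          rw [h4, measure_empty]
        rw [ae_iff]
        refine measure_mono_null ?_ hcompl
        intro v hv
        simp only [mem_setOf_eq] at hv ⊢
        intro h5
        exact hv (by simp only [heHdef, hH'def, if_pos h5])
      rw [h1, lintegral_congr_ae h2]
      exact hHtInt
    -- product bound for eH over independent Y's
    have hEH : ∀ S : Finset ℕ, ∫⁻ ω, eH (∏ i ∈ S, Y i ω) ∂P ≤ I ^ S.card := by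
      intro S
      induction S using Finset.induction_on with
      | empty =>
        simp only [Finset.prod_empty, Finset.card_empty, pow_zero, lintegral_const,
          measure_univ, mul_one]
        calc eH (1:ℝ) ≤ ENNReal.ofReal 1 := ENNReal.ofReal_le_ofReal hH'one
          _ = 1 := ENNReal.ofReal_one
      | @insert a S' ha ih =>
        have hmeas2 : Measurable fun ω => ∏ i ∈ S', Y i ω :=
          Finset.measurable_prod _ (fun i _ => hY i)
        have hind : ProbabilityTheory.IndepFun
            (fun ω => eH (Y a ω)) (fun ω => eH (∏ i ∈ S', Y i ω)) P := by
          have h0 := (hYindep.indepFun_finsetProd_of_notMem hY ha).symm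
          have h1 : (∏ j ∈ S', Y j) = fun ω => ∏ j ∈ S', Y j ω :=
            funext fun ω => Finset.prod_apply ω S' Y
          rw [h1] at h0
          exact h0.comp heHmeas heHmeas
        calc ∫⁻ ω, eH (∏ i ∈ insert a S', Y i ω) ∂P
            ≤ ∫⁻ ω, ((fun ω => eH (Y a ω)) * fun ω => eH (∏ i ∈ S', Y i ω)) ω ∂P := by
              refine lintegral_mono fun ω => ?_
              rw [Finset.prod_insert ha]
              show eH (Y a ω * ∏ i ∈ S', Y i ω) ≤ eH (Y a ω) * eH (∏ i ∈ S', Y i ω)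
              rw [heHdef]
              calc ENNReal.ofReal (H' (Y a ω * ∏ i ∈ S', Y i ω))
                  ≤ ENNReal.ofReal (H' (Y a ω) * H' (∏ i ∈ S', Y i ω)) :=
                    ENNReal.ofReal_le_ofReal (hH'sub _ _ (hYpos a ω)
                      (Finset.prod_pos fun i _ => hYpos i ω))
                _ = ENNReal.ofReal (H' (Y a ω)) * ENNReal.ofReal (H' (∏ i ∈ S', Y i ω)) :=
                    ENNReal.ofReal_mul (hH'nn _)
          _ = (∫⁻ ω, eH (Y a ω) ∂P) * ∫⁻ ω, eH (∏ i ∈ S', Y i ω) ∂P :=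
              ProbabilityTheory.lintegral_mul_eq_lintegral_mul_lintegral_of_indepFun
                (heHmeas.comp (hY a)) (heHmeas.comp hmeas2) hind
          _ ≤ I * I ^ S'.card := by
              refine mul_le_mul' (le_of_eq ?_) ih
              rw [hIdef]
              calc ∫⁻ ω, eH (Y a ω) ∂P = ∫⁻ v, eH v ∂(P.map (Y a)) :=
                  (lintegral_map heHmeas (hY a)).symm
                _ = ∫⁻ v, eH v ∂(P.map (Y 1)) := by rw [hYlaw a]
                _ = ∫⁻ ω, eH (Y 1 ω) ∂P := lintegral_map heHmeas (hY 1)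
          _ = I ^ (insert a S').card := by
              rw [Finset.card_insert_of_notMem ha, pow_succ, mul_comm]
    -- the functions Pi1, R, V, Z
    set Pi1 : Ω → ℝ := fun ω => ∏ i ∈ Finset.Icc 1 s, Y i ω with hPi1def
    set R : Ω → ℝ := fun ω => X (m+1) ω * ∏ i ∈ Finset.Icc (s+1) (m+1), Y i ω with hRdef
    set V : Ω → ℝ := fun ω => ∏ i ∈ Finset.Icc (s+1) m, Y i ω with hVdef
    set Z : Ω → ℝ := fun ω => X (m+1) ω * Y (m+1) ω with hZdef
    have hPi1m : Measurable Pi1 := Finset.measurable_prod _ (fun i _ => hY i)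
    have hRm : Measurable R := (hX _).mul (Finset.measurable_prod _ (fun i _ => hY i))
    have hVm : Measurable V := Finset.measurable_prod _ (fun i _ => hY i)
    have hZm : Measurable Z := (hX _).mul (hY _)
    have hPi1pos : ∀ ω, 0 < Pi1 ω := fun ω => Finset.prod_pos fun i _ => hYpos i ω
    have hVpos : ∀ ω, 0 < V ω := fun ω => Finset.prod_pos fun i _ => hYpos i ω
    have hRnn : ∀ ω, 0 ≤ R ω := fun ω =>
      mul_nonneg (hXnn _ ω) (Finset.prod_nonneg fun i _ => (hYpos i ω).le)
    have hRVZ : R = fun ω => V ω * Z ω := by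
      funext ω
      rw [hRdef, hVdef, hZdef]
      simp only
      rw [Finset.prod_Icc_succ_top (by omega : s + 1 ≤ m + 1)]
      ring
    -- independence facts
    have hmemT : m + 1 ∈ Finset.Icc (s+1) (m+1) := by simp [Finset.mem_Icc]; omega
    have hIndepXsR : ProbabilityTheory.IndepFun (X s) R P := by
      have hdisj : Disjoint ({s} : Finset ℕ) (Finset.Icc (s+1) (m+1)) := by
        simp [Finset.disjoint_left, Finset.mem_Icc]
      have h1 := indep_of_finsets hpm hiid {s} (Finset.Icc (s+1) (m+1)) hdisj
        (fun v => (v ⟨s, Finset.mem_singleton_self s⟩).1)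
        (fun v => (v ⟨m+1, hmemT⟩).1 * ∏ i, (v i).2)
        ((measurable_pi_apply _).fst)
        (((measurable_pi_apply _).fst).mul
          (Finset.measurable_prod Finset.univ (fun i _ => (measurable_pi_apply i).snd)))
      have h2 : (fun ω => (fun v : (↥(Finset.Icc (s+1) (m+1))) → ℝ × ℝ =>
          (v ⟨m+1, hmemT⟩).1 * ∏ i, (v i).2) (fun i => (X (i:ℕ) ω, Y (i:ℕ) ω))) = R := by
        funext ω
        rw [hRdef]
        simp only
        rw [Finset.prod_coe_sort (Finset.Icc (s+1) (m+1)) (fun j => Y j ω)]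
      rw [h2] at h1
      exact h1
    have hIndepPiR : ProbabilityTheory.IndepFun Pi1 R P := by
      have hdisj : Disjoint (Finset.Icc 1 s) (Finset.Icc (s+1) (m+1)) := by
        simp only [Finset.disjoint_left, Finset.mem_Icc]
        intro i hi
        omega
      have h1 := indep_of_finsets hpm hiid (Finset.Icc 1 s) (Finset.Icc (s+1) (m+1)) hdisj
        (fun v => ∏ i, (v i).2)
        (fun v => (v ⟨m+1, hmemT⟩).1 * ∏ i, (v i).2)
        (Finset.measurable_prod Finset.univ (fun i _ => (measurable_pi_apply i).snd))
        (((measurable_pi_apply _).fst).mul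
          (Finset.measurable_prod Finset.univ (fun i _ => (measurable_pi_apply i).snd)))
      have h2 : (fun ω => (fun v : (↥(Finset.Icc (s+1) (m+1))) → ℝ × ℝ =>
          (v ⟨m+1, hmemT⟩).1 * ∏ i, (v i).2) (fun i => (X (i:ℕ) ω, Y (i:ℕ) ω))) = R := by
        funext ω
        rw [hRdef]
        simp only
        rw [Finset.prod_coe_sort (Finset.Icc (s+1) (m+1)) (fun j => Y j ω)]
      have h3 : (fun ω => (fun v : (↥(Finset.Icc 1 s)) → ℝ × ℝ =>
          ∏ i, (v i).2) (fun i => (X (i:ℕ) ω, Y (i:ℕ) ω))) = Pi1 := by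
        funext ω
        rw [hPi1def]
        simp only
        rw [Finset.prod_coe_sort (Finset.Icc 1 s) (fun j => Y j ω)]
      rw [h2, h3] at h1
      exact h1
    have hIndepVZ : ProbabilityTheory.IndepFun V Z P := by
      have hdisj : Disjoint (Finset.Icc (s+1) m) ({m+1} : Finset ℕ) := by
        simp only [Finset.disjoint_right, Finset.mem_Icc, Finset.mem_singleton]
        intro i hi
        omega
      have h1 := indep_of_finsets hpm hiid (Finset.Icc (s+1) m) {m+1} hdisj
        (fun v => ∏ i, (v i).2)
        (fun v => (v ⟨m+1, Finset.mem_singleton_self _⟩).1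
          * (v ⟨m+1, Finset.mem_singleton_self _⟩).2)
        (Finset.measurable_prod Finset.univ (fun i _ => (measurable_pi_apply i).snd))
        (((measurable_pi_apply _).fst).mul ((measurable_pi_apply _).snd))
      have h2 : (fun ω => (fun v : (↥(Finset.Icc (s+1) m)) → ℝ × ℝ =>
          ∏ i, (v i).2) (fun i => (X (i:ℕ) ω, Y (i:ℕ) ω))) = V := by
        funext ω
        rw [hVdef]
        simp only
        rw [Finset.prod_coe_sort (Finset.Icc (s+1) m) (fun j => Y j ω)]
      rw [h2] at h1
      exact h1
    -- law positivity helpers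
    haveI hPMapV : IsProbabilityMeasure (P.map V) := Measure.isProbabilityMeasure_map hVm.aemeasurable
    haveI hPMapZ : IsProbabilityMeasure (P.map Z) := Measure.isProbabilityMeasure_map hZm.aemeasurable
    haveI hPMapR : IsProbabilityMeasure (P.map R) := Measure.isProbabilityMeasure_map hRm.aemeasurable
    haveI hPMapPi : IsProbabilityMeasure (P.map Pi1) :=
      Measure.isProbabilityMeasure_map hPi1m.aemeasurable
    -- tail bound for R
    set J : ENNReal := I ^ (Finset.Icc (s+1) m).card with hJdef
    have hJne : J ≠ ⊤ := ENNReal.pow_ne_top hIfin.ne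
    have hRtail : ∀ u : ℝ, 0 < u →
        P {ω | R ω > u} ≤ J * P {ω | X 1 ω * Y 1 ω > u} := by
      intro u hu
      have hmapVZ : P.map (fun ω => (V ω, Z ω)) = (P.map V).prod (P.map Z) :=
        (ProbabilityTheory.indepFun_iff_map_prod_eq_prod_map_map
          hVm.aemeasurable hZm.aemeasurable).mp hIndepVZ
      have hVae : ∀ᵐ v ∂(P.map V), 0 < v := by
        rw [ae_iff]
        have h1 : {v : ℝ | ¬ 0 < v} = Iic (0:ℝ) := by ext v; simp
        rw [h1, Measure.map_apply hVm measurableSet_Iic]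
        have h2 : V ⁻¹' (Iic 0) = ∅ := by
          ext ω; simp [not_le.mpr (hVpos ω)]
        rw [h2, measure_empty]
      calc P {ω | R ω > u}
          = P.map (fun ω => (V ω, Z ω)) {p : ℝ × ℝ | p.1 * p.2 > u} := by
            rw [Measure.map_apply (hVm.prodMk hZm) (hSxy u)]
            congr 1
            ext ω
            simp only [Set.mem_preimage, mem_setOf_eq, hRVZ]
        _ = ∫⁻ v, (P.map Z) (Prod.mk v ⁻¹' {p : ℝ × ℝ | p.1 * p.2 > u}) ∂(P.map V) := by
            rw [hmapVZ, Measure.prod_apply (hSxy u)]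
        _ ≤ ∫⁻ v, eH v * P {ω | X 1 ω * Y 1 ω > u} ∂(P.map V) := by
            refine lintegral_mono_ae ?_
            filter_upwards [hVae] with v hv
            have hpre : Prod.mk v ⁻¹' {p : ℝ × ℝ | p.1 * p.2 > u} = Ioi (u / v) := by
              ext z
              simp only [Set.mem_preimage, mem_setOf_eq, Set.mem_Ioi, gt_iff_lt]
              rw [div_lt_iff₀ hv]
              constructor <;> intro h <;> linarith [mul_comm v z]
            rw [hpre]
            have hZlaw : (P.map Z) (Ioi (u / v)) = P {ω | X 1 ω * Y 1 ω > u / v} := by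
              rw [Measure.map_apply hZm measurableSet_Ioi]
              have h3 : Z ⁻¹' (Ioi (u / v)) = {ω | X (m+1) ω * Y (m+1) ω > u / v} := by
                ext ω; rw [hZdef]; simp [gt_iff_lt]
              rw [h3, hmXY (m+1)]
            rw [hZlaw]
            exact hTbound v hv u hu
        _ = (∫⁻ v, eH v ∂(P.map V)) * P {ω | X 1 ω * Y 1 ω > u} :=
            lintegral_mul_const _ heHmeas
        _ ≤ J * P {ω | X 1 ω * Y 1 ω > u} := by
            refine mul_le_mul_left ?_ _
            rw [lintegral_map heHmeas hVm, hJdef]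
            exact hEH (Finset.Icc (s+1) m)
    -- the truncated integral τ
    set τ : ℝ → ENNReal := fun c => ∫⁻ v in Ioi c, eH v ∂(P.map Pi1) with hτdef
    have hτfin : ∫⁻ v, eH v ∂(P.map Pi1) ≠ ⊤ := by
      rw [lintegral_map heHmeas hPi1m]
      exact (lt_of_le_of_lt (hEH (Finset.Icc 1 s)) (ENNReal.pow_lt_top hIfin)).ne
    have hτtend : Tendsto (fun n : ℕ => τ (n : ℝ)) atTop (nhds 0) := by
      have h1 : ∀ n : ℕ, τ (n : ℝ)
          = ∫⁻ v, (Ioi ((n : ℝ))).indicator eH v ∂(P.map Pi1) := by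
        intro n
        rw [hτdef]
        exact (lintegral_indicator measurableSet_Ioi eH).symm
      have h2 := tendsto_lintegral_of_dominated_convergence (μ := P.map Pi1)
        (F := fun (n : ℕ) v => (Ioi ((n : ℝ))).indicator eH v)
        (f := fun _ => 0) (bound := eH)
        (fun n => heHmeas.indicator measurableSet_Ioi)
        (fun n => Eventually.of_forall fun v => Set.indicator_le_self _ _ v)
        hτfin
        (Eventually.of_forall fun v => by
          obtain ⟨N, hN⟩ := exists_nat_gt v
          have hev : (fun _ : ℕ => (0 : ENNReal)) =ᶠ[atTop]
              (fun n : ℕ => (Ioi ((n : ℝ))).indicator eH v) := by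
            filter_upwards [eventually_ge_atTop N] with n hn
            have h3 : ¬ v ∈ Ioi ((n : ℝ)) := by
              simp only [Set.mem_Ioi, not_lt]
              calc v ≤ (N : ℝ) := hN.le
                _ ≤ (n : ℝ) := Nat.cast_le.mpr hn
            rw [Set.indicator_of_notMem h3]
          exact Tendsto.congr' hev tendsto_const_nhds)
      simp only [lintegral_zero] at h2
      refine Tendsto.congr (fun n => (h1 n).symm) h2
    -- the c-truncated joint bound
    have hTerm2 : ∀ x : ℝ, 0 < x → ∀ c : ℝ, 1 ≤ c →
        P {ω | Pi1 ω > c ∧ Pi1 ω * R ω > x}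
          ≤ J * P {ω | X 1 ω * Y 1 ω > x} * τ c := by
      intro x hx c hc
      have hmapPR : P.map (fun ω => (Pi1 ω, R ω)) = (P.map Pi1).prod (P.map R) :=
        (ProbabilityTheory.indepFun_iff_map_prod_eq_prod_map_map
          hPi1m.aemeasurable hRm.aemeasurable).mp hIndepPiR
      have hSm : MeasurableSet {p : ℝ × ℝ | p.1 > c ∧ p.1 * p.2 > x} := by
        have : {p : ℝ × ℝ | p.1 > c ∧ p.1 * p.2 > x}
            = {p : ℝ × ℝ | p.1 > c} ∩ {p : ℝ × ℝ | p.1 * p.2 > x} := rfl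
        rw [this]
        exact (hSx c).inter (hSxy x)
      calc P {ω | Pi1 ω > c ∧ Pi1 ω * R ω > x}
          = P.map (fun ω => (Pi1 ω, R ω)) {p : ℝ × ℝ | p.1 > c ∧ p.1 * p.2 > x} := by
            rw [Measure.map_apply (hPi1m.prodMk hRm) hSm]
            rfl
        _ = ∫⁻ v, (P.map R) (Prod.mk v ⁻¹' {p : ℝ × ℝ | p.1 > c ∧ p.1 * p.2 > x})
            ∂(P.map Pi1) := by
            rw [hmapPR, Measure.prod_apply hSm]
        _ ≤ ∫⁻ v, (Ioi c).indicator (fun v => J * P {ω | X 1 ω * Y 1 ω > x} * eH v) v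
            ∂(P.map Pi1) := by
            refine lintegral_mono fun v => ?_
            by_cases hv : c < v
            · have hvpos : 0 < v := lt_of_lt_of_le zero_lt_one (hc.trans hv.le)
              have hpre : Prod.mk v ⁻¹' {p : ℝ × ℝ | p.1 > c ∧ p.1 * p.2 > x}
                  = Ioi (x / v) := by
                ext r
                simp only [Set.mem_preimage, mem_setOf_eq, Set.mem_Ioi, gt_iff_lt, hv,
                  true_and]
                rw [div_lt_iff₀ hvpos]
                constructor <;> intro h <;> linarith [mul_comm v r]
              rw [hpre, Set.indicator_of_mem (Set.mem_Ioi.mpr hv)]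
              have hRl : (P.map R) (Ioi (x / v)) = P {ω | R ω > x / v} := by
                rw [Measure.map_apply hRm measurableSet_Ioi]
                rfl
              rw [hRl]
              calc P {ω | R ω > x / v}
                  ≤ J * P {ω | X 1 ω * Y 1 ω > x / v} :=
                    hRtail _ (div_pos hx hvpos)
                _ ≤ J * (eH v * P {ω | X 1 ω * Y 1 ω > x}) :=
                    mul_le_mul_right (hTbound v hvpos x hx) J
                _ = J * P {ω | X 1 ω * Y 1 ω > x} * eH v := by ring
            · have hpre : Prod.mk v ⁻¹' {p : ℝ × ℝ | p.1 > c ∧ p.1 * p.2 > x} = ∅ := by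
                ext r
                simp only [Set.mem_preimage, mem_setOf_eq, Set.mem_empty_iff_false,
                  iff_false, not_and]
                intro h
                exact absurd h hv
              rw [hpre, measure_empty, Set.indicator_of_notMem (by simpa using hv)]
        _ = J * P {ω | X 1 ω * Y 1 ω > x} * τ c := by
            rw [lintegral_indicator measurableSet_Ioi, hτdef]
            simp only
            rw [lintegral_const_mul _ heHmeas]
    -- the independent-factor bound
    have hT1 : ∀ a : ℝ, P ({ω | X s ω > a} ∩ {ω | R ω > a})
        = P {ω | X s ω > a} * P {ω | R ω > a} := by
      intro a
      have h1 := hIndepXsR.measure_inter_preimage_eq_mul (Ioi a) (Ioi a)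
        measurableSet_Ioi measurableSet_Ioi
      exact h1
    -- X tail goes to zero
    have hFtend : Tendsto (fun n : ℕ => P {ω | X 1 ω > (n : ℝ)}) atTop (nhds 0) := by
      have hanti : Antitone fun n : ℕ => {ω | X 1 ω > (n : ℝ)} := by
        intro a b hab ω hω
        have hω' : (b : ℝ) < X 1 ω := hω
        exact lt_of_le_of_lt (Nat.cast_le.mpr hab) hω'
      have h1 := tendsto_measure_iInter_atTop (μ := P)
        (fun n => (measurableSet_lt measurable_const (hX 1)).nullMeasurableSet)
        hanti ⟨0, measure_ne_top _ _⟩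
      have h2 : (⋂ n : ℕ, {ω | X 1 ω > (n : ℝ)}) = ∅ := by
        ext ω
        simp only [Set.mem_iInter, mem_setOf_eq, Set.mem_empty_iff_false, iff_false,
          not_forall, not_lt]
        obtain ⟨n, hn⟩ := exists_nat_gt (X 1 ω)
        exact ⟨n, hn.le⟩
      rw [h2, measure_empty] at h1
      exact h1
    -- FINAL ASSEMBLY
    rw [Asymptotics.isLittleO_iff]
    intro δ hδ
    set η : ENNReal := ENNReal.ofReal δ with hηdef
    have hη0 : η ≠ 0 := by
      rw [hηdef]
      simp [ENNReal.ofReal_eq_zero, not_le, hδ]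
    have hηt : η ≠ ⊤ := ENNReal.ofReal_ne_top
    have hhalf : (0 : ENNReal) < η / 2 := ENNReal.half_pos hη0
    -- choose n₀
    have hJτ : Tendsto (fun n : ℕ => J * τ (n : ℝ)) atTop (nhds 0) := by
      have := ENNReal.Tendsto.const_mul hτtend (Or.inr hJne)
      simpa using this
    obtain ⟨n₀, hn₀sm, hn₀1⟩ := ((hJτ.eventually_lt_const hhalf).and
      (eventually_ge_atTop 1)).exists
    have hn₀pos : (0 : ℝ) < (n₀ : ℝ) := by
      have : (1 : ℝ) ≤ (n₀ : ℝ) := by exact_mod_cast hn₀1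
      linarith
    -- choose u₀
    set A' : ENNReal := J * eH (n₀ : ℝ) with hA'def
    have hA'ne : A' ≠ ⊤ := ENNReal.mul_ne_top hJne ENNReal.ofReal_ne_top
    have hA'tend : Tendsto (fun n : ℕ => A' * P {ω | X 1 ω > (n : ℝ)}) atTop (nhds 0) := by
      have := ENNReal.Tendsto.const_mul hFtend (Or.inr hA'ne)
      simpa using this
    obtain ⟨u₀, hu₀⟩ := (hA'tend.eventually_lt_const hhalf).exists
    filter_upwards [eventually_gt_atTop 0,
      eventually_ge_atTop ((n₀ : ℝ) * (u₀ : ℝ) + 1)] with x hx0 hxge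
    have hxdiv : (u₀ : ℝ) ≤ x / (n₀ : ℝ) := by
      rw [le_div_iff₀ hn₀pos]
      linarith [mul_comm (u₀ : ℝ) (n₀ : ℝ)]
    -- inclusion
    have hincl : {ω | X s ω * ∏ i ∈ Finset.Icc 1 s, Y i ω > x ∧
        X (m+1) ω * ∏ i ∈ Finset.Icc 1 (m+1), Y i ω > x}
        ⊆ ({ω | X s ω > x / (n₀ : ℝ)} ∩ {ω | R ω > x / (n₀ : ℝ)})
          ∪ {ω | Pi1 ω > (n₀ : ℝ) ∧ Pi1 ω * R ω > x} := by
      intro ω hω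
      obtain ⟨h1, h2⟩ := hω
      have hspliticc : Finset.Icc 1 (m+1) = Finset.Icc 1 s ∪ Finset.Icc (s+1) (m+1) := by
        ext i
        simp only [Finset.mem_union, Finset.mem_Icc]
        omega
      have hdisj2 : Disjoint (Finset.Icc 1 s) (Finset.Icc (s+1) (m+1)) := by
        simp only [Finset.disjoint_left, Finset.mem_Icc]
        intro i hi
        omega
      have hsplit : X (m+1) ω * ∏ i ∈ Finset.Icc 1 (m+1), Y i ω = Pi1 ω * R ω := by
        rw [hspliticc, Finset.prod_union hdisj2, hPi1def, hRdef]
        simp only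
        ring
      rw [hsplit] at h2
      have h1' : x < X s ω * Pi1 ω := by
        rw [hPi1def]
        exact h1
      by_cases hcc : Pi1 ω ≤ (n₀ : ℝ)
      · left
        constructor
        · show x / (n₀ : ℝ) < X s ω
          rw [div_lt_iff₀ hn₀pos]
          calc x < X s ω * Pi1 ω := h1'
            _ ≤ X s ω * (n₀ : ℝ) := mul_le_mul_of_nonneg_left hcc (hXnn s ω)
        · show x / (n₀ : ℝ) < R ω
          rw [div_lt_iff₀ hn₀pos]
          calc x < Pi1 ω * R ω := h2
            _ = R ω * Pi1 ω := by ring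
            _ ≤ R ω * (n₀ : ℝ) := mul_le_mul_of_nonneg_left hcc (hRnn ω)
      · right
        exact ⟨lt_of_not_ge hcc, h2⟩
    -- measure estimates
    have hPA : P ({ω | X s ω > x / (n₀ : ℝ)} ∩ {ω | R ω > x / (n₀ : ℝ)})
        ≤ η / 2 * P {ω | X 1 ω * Y 1 ω > x} := by
      rw [hT1 (x / (n₀ : ℝ))]
      have hxdivpos : 0 < x / (n₀ : ℝ) := div_pos hx0 hn₀pos
      calc P {ω | X s ω > x / (n₀ : ℝ)} * P {ω | R ω > x / (n₀ : ℝ)}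
          ≤ P {ω | X 1 ω > (u₀ : ℝ)} * (J * (eH (n₀ : ℝ) * P {ω | X 1 ω * Y 1 ω > x})) := by
            refine mul_le_mul' ?_ ?_
            · rw [hmX s]
              exact measure_mono (fun ω hω => lt_of_le_of_lt hxdiv hω)
            · calc P {ω | R ω > x / (n₀ : ℝ)}
                  ≤ J * P {ω | X 1 ω * Y 1 ω > x / (n₀ : ℝ)} := hRtail _ hxdivpos
                _ ≤ J * (eH (n₀ : ℝ) * P {ω | X 1 ω * Y 1 ω > x}) :=
                    mul_le_mul_right (hTbound _ hn₀pos x hx0) J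
        _ = (A' * P {ω | X 1 ω > (u₀ : ℝ)}) * P {ω | X 1 ω * Y 1 ω > x} := by
            rw [hA'def]; ring
        _ ≤ η / 2 * P {ω | X 1 ω * Y 1 ω > x} := mul_le_mul_left hu₀.le _
    have hPB : P {ω | Pi1 ω > (n₀ : ℝ) ∧ Pi1 ω * R ω > x}
        ≤ η / 2 * P {ω | X 1 ω * Y 1 ω > x} := by
      calc P {ω | Pi1 ω > (n₀ : ℝ) ∧ Pi1 ω * R ω > x}
          ≤ J * P {ω | X 1 ω * Y 1 ω > x} * τ (n₀ : ℝ) :=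
            hTerm2 x hx0 (n₀ : ℝ) (by exact_mod_cast hn₀1)
        _ = (J * τ (n₀ : ℝ)) * P {ω | X 1 ω * Y 1 ω > x} := by ring
        _ ≤ η / 2 * P {ω | X 1 ω * Y 1 ω > x} := mul_le_mul_left hn₀sm.le _
    have hPE : P {ω | X s ω * ∏ i ∈ Finset.Icc 1 s, Y i ω > x ∧
        X (m+1) ω * ∏ i ∈ Finset.Icc 1 (m+1), Y i ω > x}
        ≤ η * P {ω | X 1 ω * Y 1 ω > x} := by
      calc P {ω | X s ω * ∏ i ∈ Finset.Icc 1 s, Y i ω > x ∧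
          X (m+1) ω * ∏ i ∈ Finset.Icc 1 (m+1), Y i ω > x}
          ≤ P (({ω | X s ω > x / (n₀ : ℝ)} ∩ {ω | R ω > x / (n₀ : ℝ)})
            ∪ {ω | Pi1 ω > (n₀ : ℝ) ∧ Pi1 ω * R ω > x}) := measure_mono hincl
        _ ≤ P ({ω | X s ω > x / (n₀ : ℝ)} ∩ {ω | R ω > x / (n₀ : ℝ)})
            + P {ω | Pi1 ω > (n₀ : ℝ) ∧ Pi1 ω * R ω > x} := measure_union_le _ _
        _ ≤ η / 2 * P {ω | X 1 ω * Y 1 ω > x}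
            + η / 2 * P {ω | X 1 ω * Y 1 ω > x} := add_le_add hPA hPB
        _ = η * P {ω | X 1 ω * Y 1 ω > x} := by
            rw [← add_mul, ENNReal.add_halves]
    -- convert to the real statement
    have hfin : η * P {ω | X 1 ω * Y 1 ω > x} ≠ ⊤ :=
      ENNReal.mul_ne_top hηt (hTne x)
    have h5 : (P {ω | X s ω * ∏ i ∈ Finset.Icc 1 s, Y i ω > x ∧
        X (m+1) ω * ∏ i ∈ Finset.Icc 1 (m+1), Y i ω > x}).toReal
        ≤ δ * (P {ω | X 1 ω * Y 1 ω > x}).toReal := by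
      have h6 := ENNReal.toReal_mono hfin hPE
      rwa [ENNReal.toReal_mul, hηdef, ENNReal.toReal_ofReal hδ.le] at h6
    rw [Real.norm_eq_abs, abs_of_nonneg ENNReal.toReal_nonneg,
      Real.norm_eq_abs, abs_of_nonneg (hWpos x hx0).le]
    calc (P {ω | X s ω * ∏ i ∈ Finset.Icc 1 s, Y i ω > x ∧
        X (m+1) ω * ∏ i ∈ Finset.Icc 1 (m+1), Y i ω > x}).toReal
        ≤ δ * (P {ω | X 1 ω * Y 1 ω > x}).toReal := h5
      _ ≤ δ * W x := mul_le_mul_of_nonneg_left (hdom x hx0) hδ.le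
  · -- DEGENERATE CASE: the tail of X₁Y₁ vanishes somewhere
    push_neg at hB
    obtain ⟨x₀, hx₀pos, hx₀⟩ := hB
    -- Step 1 : the tail of X must vanish somewhere
    have hA1 : ∃ u₀ : ℝ, 0 < u₀ ∧ P {ω | X 1 ω > u₀} = 0 := by
      by_contra hF
      push_neg at hF
      haveI hFm : IsProbabilityMeasure (P.map (X 1)) :=
        Measure.isProbabilityMeasure_map (hX 1).aemeasurable
      haveI hGm : IsProbabilityMeasure (P.map (Y 1)) :=
        Measure.isProbabilityMeasure_map (hY 1).aemeasurable
      -- key inequality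
      have key : ∀ u : ℝ, 0 < u →
          ((P.map (Y 1)) (Ioi (x₀ / u))).toReal
            ≤ |θ| * b₁ * |∫ y in Ioi (x₀ / u), φ₂ y ∂(P.map (Y 1))| := by
        intro u hu
        have hv : 0 < x₀ / u := div_pos hx₀pos hu
        have hSm : MeasurableSet (Ioi u ×ˢ Ioi (x₀ / u)) :=
          measurableSet_Ioi.prod measurableSet_Ioi
        have hsub : (fun ω => (X 1 ω, Y 1 ω)) ⁻¹' (Ioi u ×ˢ Ioi (x₀ / u))
            ⊆ {ω | X 1 ω * Y 1 ω > x₀} := by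
          intro ω hω
          simp only [Set.mem_preimage, Set.mem_prod, Set.mem_Ioi] at hω
          show x₀ < X 1 ω * Y 1 ω
          calc x₀ = u * (x₀ / u) := by field_simp
            _ < X 1 ω * Y 1 ω := mul_lt_mul'' hω.1 hω.2 hu.le hv.le
        have h0 : ∫⁻ p in Ioi u ×ˢ Ioi (x₀ / u),
            ENNReal.ofReal (1 + θ * φ₁ p.1 * φ₂ p.2)
              ∂((P.map (X 1)).prod (P.map (Y 1))) = 0 := by
          have h1 : P.map (fun ω => (X 1 ω, Y 1 ω)) (Ioi u ×ˢ Ioi (x₀ / u)) = 0 := by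
            rw [Measure.map_apply (hpm 1) hSm]
            exact measure_mono_null hsub hx₀
          rw [hjoint] at h1
          rwa [withDensity_apply _ hSm] at h1
        have hρmeas : Measurable fun p : ℝ × ℝ => 1 + θ * φ₁ p.1 * φ₂ p.2 :=
          measurable_const.add
            ((measurable_const.mul (hφ₁.comp measurable_fst)).mul (hφ₂.comp measurable_snd))
        have hae : ∀ᵐ p ∂(((P.map (X 1)).prod (P.map (Y 1))).restrict
            (Ioi u ×ˢ Ioi (x₀ / u))), 1 + θ * φ₁ p.1 * φ₂ p.2 ≤ 0 := by
          have h2 := (setLIntegral_eq_zero_iff hSm hρmeas.ennreal_ofReal).mp h0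
          rw [ae_restrict_iff' hSm]
          filter_upwards [h2] with p hp hmem
          have h3 := hp hmem
          simpa [ENNReal.ofReal_eq_zero] using h3
        have hint : ∫ p in Ioi u ×ˢ Ioi (x₀ / u),
            (1 + θ * φ₁ p.1 * φ₂ p.2) ∂((P.map (X 1)).prod (P.map (Y 1))) ≤ 0 :=
          integral_nonpos_of_ae hae
        have hres : ((P.map (X 1)).prod (P.map (Y 1))).restrict (Ioi u ×ˢ Ioi (x₀ / u))
            = ((P.map (X 1)).restrict (Ioi u)).prod ((P.map (Y 1)).restrict (Ioi (x₀ / u))) :=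
          (Measure.prod_restrict _ _).symm
        have hb₁nn : 0 ≤ b₁ := le_trans (abs_nonneg _) (hb₁ 0)
        have hb₂nn : 0 ≤ b₂ := le_trans (abs_nonneg _) (hb₂ 0)
        have hint1 : Integrable (fun p : ℝ × ℝ => θ * φ₁ p.1 * φ₂ p.2)
            (((P.map (X 1)).restrict (Ioi u)).prod ((P.map (Y 1)).restrict (Ioi (x₀ / u)))) := by
          refine (integrable_const (|θ| * b₁ * b₂)).mono'
            ((measurable_const.mul (hφ₁.comp measurable_fst)).mul
              (hφ₂.comp measurable_snd)).aestronglyMeasurable ?_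
          refine Eventually.of_forall fun p => ?_
          rw [Real.norm_eq_abs, abs_mul, abs_mul]
          have h1 := hb₁ p.1
          have h2 := hb₂ p.2
          have h3 : |θ| * |φ₁ p.1| ≤ |θ| * b₁ :=
            mul_le_mul_of_nonneg_left h1 (abs_nonneg θ)
          exact mul_le_mul h3 h2 (abs_nonneg _) (by positivity)
        have hsplit : ∫ p in Ioi u ×ˢ Ioi (x₀ / u),
            (1 + θ * φ₁ p.1 * φ₂ p.2) ∂((P.map (X 1)).prod (P.map (Y 1)))
            = ((P.map (X 1)) (Ioi u)).toReal * ((P.map (Y 1)) (Ioi (x₀ / u))).toReal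
              + θ * ((∫ x in Ioi u, φ₁ x ∂(P.map (X 1)))
                  * (∫ y in Ioi (x₀ / u), φ₂ y ∂(P.map (Y 1)))) := by
          rw [hres, integral_add (integrable_const 1) hint1]
          congr 1
          · rw [integral_const, measureReal_def, ← Set.univ_prod_univ, Measure.prod_prod,
              Measure.restrict_apply_univ, Measure.restrict_apply_univ,
              ENNReal.toReal_mul, smul_eq_mul, mul_one]
          · have h4 := integral_prod_mul (μ := (P.map (X 1)).restrict (Ioi u))
              (ν := (P.map (Y 1)).restrict (Ioi (x₀ / u))) (fun x => θ * φ₁ x) φ₂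
            have h5 : ∫ x, θ * φ₁ x ∂((P.map (X 1)).restrict (Ioi u))
                = θ * ∫ x, φ₁ x ∂((P.map (X 1)).restrict (Ioi u)) := by
              rw [show (fun x => θ * φ₁ x) = fun x => θ • φ₁ x from rfl, integral_smul,
                smul_eq_mul]
            calc ∫ p, θ * φ₁ p.1 * φ₂ p.2
                  ∂(((P.map (X 1)).restrict (Ioi u)).prod ((P.map (Y 1)).restrict (Ioi (x₀ / u))))
                = (∫ x, θ * φ₁ x ∂((P.map (X 1)).restrict (Ioi u)))
                  * ∫ y, φ₂ y ∂((P.map (Y 1)).restrict (Ioi (x₀ / u))) := h4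
              _ = θ * ((∫ x in Ioi u, φ₁ x ∂(P.map (X 1)))
                  * (∫ y in Ioi (x₀ / u), φ₂ y ∂(P.map (Y 1)))) := by rw [h5]; ring
        have hFval : (P.map (X 1)) (Ioi u) = P {ω | X 1 ω > u} := by
          rw [Measure.map_apply (hX 1) measurableSet_Ioi]; rfl
        have ha : 0 < ((P.map (X 1)) (Ioi u)).toReal := by
          rw [hFval]
          exact ENNReal.toReal_pos (hF u hu) (measure_ne_top _ _)
        have hAbs : |∫ x in Ioi u, φ₁ x ∂(P.map (X 1))|
            ≤ b₁ * ((P.map (X 1)) (Ioi u)).toReal := by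
          have habs1 : Integrable (fun x => φ₁ x) ((P.map (X 1)).restrict (Ioi u)) := by
            refine (integrable_const b₁).mono' hφ₁.aestronglyMeasurable ?_
            exact Eventually.of_forall fun x => by rw [Real.norm_eq_abs]; exact hb₁ x
          calc |∫ x in Ioi u, φ₁ x ∂(P.map (X 1))|
              ≤ ∫ x in Ioi u, |φ₁ x| ∂(P.map (X 1)) := by
                rw [← Real.norm_eq_abs]
                exact (norm_integral_le_integral_norm _).trans (le_of_eq (by simp))
            _ ≤ ∫ _x in Ioi u, b₁ ∂(P.map (X 1)) :=
                integral_mono habs1.abs (integrable_const b₁) (fun x => hb₁ x)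
            _ = b₁ * ((P.map (X 1)) (Ioi u)).toReal := by
                rw [setIntegral_const, smul_eq_mul, mul_comm, measureReal_def]
        -- combine
        set a := ((P.map (X 1)) (Ioi u)).toReal with hadef
        set g := ((P.map (Y 1)) (Ioi (x₀ / u))).toReal with hgdef
        set A := ∫ x in Ioi u, φ₁ x ∂(P.map (X 1)) with hAdef
        set B := ∫ y in Ioi (x₀ / u), φ₂ y ∂(P.map (Y 1)) with hBdef
        rw [hsplit] at hint
        have h6 : a * g ≤ |θ| * (|A| * |B|) := by
          have h7 : a * g ≤ -(θ * (A * B)) := by linarith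
          calc a * g ≤ |θ * (A * B)| := h7.trans (neg_le_abs _)
            _ = |θ| * (|A| * |B|) := by rw [abs_mul, abs_mul]
        have h8 : a * g ≤ a * (|θ| * b₁ * |B|) := by
          calc a * g ≤ |θ| * (|A| * |B|) := h6
            _ ≤ |θ| * ((b₁ * a) * |B|) := by
                refine mul_le_mul_of_nonneg_left ?_ (abs_nonneg θ)
                exact mul_le_mul_of_nonneg_right hAbs (abs_nonneg _)
            _ = a * (|θ| * b₁ * |B|) := by ring
        exact le_of_mul_le_mul_left h8 ha
      -- limits
      have hGlim : Tendsto
          (fun n : ℕ => ((P.map (Y 1)) (Ioi (x₀ / ((n : ℝ) + 1)))).toReal) atTop (nhds 1) := by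
        have hmono : Monotone fun n : ℕ => Ioi (x₀ / ((n : ℝ) + 1)) := by
          intro a b hab
          apply Set.Ioi_subset_Ioi
          apply div_le_div_of_nonneg_left hx₀pos.le (by positivity)
          exact_mod_cast by push_cast; linarith [(Nat.cast_le (α := ℝ)).mpr hab]
        have h1 := tendsto_measure_iUnion_atTop (μ := P.map (Y 1)) hmono
        have hUnion : (⋃ n : ℕ, Ioi (x₀ / ((n : ℝ) + 1))) = Ioi (0 : ℝ) := by
          ext y
          simp only [Set.mem_iUnion, Set.mem_Ioi]
          constructor
          · rintro ⟨n, hn⟩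
            exact lt_trans (by positivity) hn
          · intro hy
            obtain ⟨n, hn⟩ := exists_nat_gt (x₀ / y)
            refine ⟨n, ?_⟩
            rw [div_lt_iff₀ (by positivity)]
            have h2 : x₀ / y < (n : ℝ) + 1 := hn.trans (by linarith)
            calc x₀ = (x₀ / y) * y := by field_simp
              _ < ((n : ℝ) + 1) * y := by exact mul_lt_mul_of_pos_right h2 hy
              _ = y * ((n : ℝ) + 1) := by ring
        have hG1 : (P.map (Y 1)) (Ioi (0 : ℝ)) = 1 := by
          rw [Measure.map_apply (hY 1) measurableSet_Ioi]
          have : (Y 1) ⁻¹' (Ioi 0) = Set.univ := by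
            ext ω; simp [hYpos 1 ω]
          rw [this, measure_univ]
        rw [hUnion, hG1] at h1
        have h2 := (ENNReal.tendsto_toReal (by simp : (1 : ENNReal) ≠ ⊤)).comp h1
        exact h2
      have hB0 : Tendsto (fun n : ℕ => ∫ y in Ioi (x₀ / ((n : ℝ) + 1)), φ₂ y ∂(P.map (Y 1)))
          atTop (nhds 0) := by
        have hb₂nn : 0 ≤ b₂ := le_trans (abs_nonneg _) (hb₂ 0)
        have hmeas : ∀ n : ℕ, AEStronglyMeasurable
            (fun y => (Ioi (x₀ / ((n : ℝ) + 1))).indicator φ₂ y) (P.map (Y 1)) :=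
          fun n => (hφ₂.indicator measurableSet_Ioi).aestronglyMeasurable
        have hbdd : ∀ n : ℕ, ∀ᵐ y ∂(P.map (Y 1)),
            ‖(Ioi (x₀ / ((n : ℝ) + 1))).indicator φ₂ y‖ ≤ b₂ := by
          intro n
          refine Eventually.of_forall fun y => ?_
          by_cases hy : y ∈ Ioi (x₀ / ((n : ℝ) + 1))
          · rw [Set.indicator_of_mem hy, Real.norm_eq_abs]; exact hb₂ y
          · rw [Set.indicator_of_notMem hy]; simpa using hb₂nn
        have hptw : ∀ᵐ y ∂(P.map (Y 1)), Tendsto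
            (fun n : ℕ => (Ioi (x₀ / ((n : ℝ) + 1))).indicator φ₂ y) atTop
            (nhds ((Ioi (0:ℝ)).indicator φ₂ y)) := by
          refine Eventually.of_forall fun y => ?_
          by_cases hy : 0 < y
          · have hev : (fun _ : ℕ => (Ioi (0:ℝ)).indicator φ₂ y) =ᶠ[atTop]
                (fun n : ℕ => (Ioi (x₀ / ((n : ℝ) + 1))).indicator φ₂ y) := by
              obtain ⟨N, hN⟩ := exists_nat_gt (x₀ / y)
              filter_upwards [eventually_ge_atTop N] with n hn
              have h3 : x₀ / ((n : ℝ) + 1) < y := by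
                rw [div_lt_iff₀ (by positivity)]
                have h4 : x₀ / y < (n : ℝ) + 1 := by
                  have h5 : (N : ℝ) ≤ (n : ℝ) := Nat.cast_le.mpr hn
                  linarith
                calc x₀ = (x₀ / y) * y := by field_simp
                  _ < ((n : ℝ) + 1) * y := mul_lt_mul_of_pos_right h4 hy
                  _ = y * ((n : ℝ) + 1) := by ring
              rw [Set.indicator_of_mem (Set.mem_Ioi.mpr h3),
                Set.indicator_of_mem (Set.mem_Ioi.mpr hy)]
            exact Tendsto.congr' hev tendsto_const_nhds
          · have h5 : ∀ n : ℕ, (Ioi (x₀ / ((n : ℝ) + 1))).indicator φ₂ y = 0 := by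
              intro n
              apply Set.indicator_of_notMem
              simp only [Set.mem_Ioi, not_lt]
              exact le_trans (le_of_not_gt hy) (by positivity)
            have h6 : (Ioi (0 : ℝ)).indicator φ₂ y = 0 :=
              Set.indicator_of_notMem (by simpa using hy) _
            simp only [h5, h6]
            exact tendsto_const_nhds
        have hDCT := tendsto_integral_of_dominated_convergence (μ := P.map (Y 1))
          (F := fun (n : ℕ) y => (Ioi (x₀ / ((n : ℝ) + 1))).indicator φ₂ y)
          (f := fun y => (Ioi (0 : ℝ)).indicator φ₂ y) (bound := fun _ => b₂)
          hmeas (integrable_const b₂) hbdd hptw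
        have hzero : ∫ y, (Ioi (0 : ℝ)).indicator φ₂ y ∂(P.map (Y 1)) = 0 := by
          have hcompl : (P.map (Y 1)) {y : ℝ | ¬ y ∈ Ioi (0:ℝ)} = 0 := by
            rw [show {y : ℝ | ¬ y ∈ Ioi (0:ℝ)} = Iic (0:ℝ) by ext y; simp,
              Measure.map_apply (hY 1) measurableSet_Iic]
            have h7 : (Y 1) ⁻¹' (Iic 0) = ∅ := by
              ext ω; simp [not_le.mpr (hYpos 1 ω)]
            rw [h7, measure_empty]
          have hcongr : ∀ᵐ y ∂(P.map (Y 1)),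
              (Ioi (0 : ℝ)).indicator φ₂ y = φ₂ y := by
            rw [ae_iff]
            refine measure_mono_null ?_ hcompl
            intro y hy
            simp only [mem_setOf_eq] at hy ⊢
            intro hmem
            exact hy (Set.indicator_of_mem hmem _)
          rw [integral_congr_ae hcongr,
            integral_map (hY 1).aemeasurable hφ₂.aestronglyMeasurable]
          exact hmean2
        have h7 : ∀ n : ℕ, ∫ y, (Ioi (x₀ / ((n : ℝ) + 1))).indicator φ₂ y ∂(P.map (Y 1))
            = ∫ y in Ioi (x₀ / ((n : ℝ) + 1)), φ₂ y ∂(P.map (Y 1)) :=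
          fun n => integral_indicator measurableSet_Ioi
        rw [hzero] at hDCT
        exact hDCT.congr h7
      have hBlim : Tendsto
          (fun n : ℕ => |θ| * b₁ * |∫ y in Ioi (x₀ / ((n : ℝ) + 1)), φ₂ y ∂(P.map (Y 1))|)
          atTop (nhds 0) := by
        have h1 : Tendsto
            (fun n : ℕ => |∫ y in Ioi (x₀ / ((n : ℝ) + 1)), φ₂ y ∂(P.map (Y 1))|)
            atTop (nhds 0) := by
          have := (continuous_abs.tendsto 0).comp hB0
          rw [abs_zero] at this
          exact this
        have := h1.const_mul (|θ| * b₁)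
        simpa using this
      have hcontr : (1 : ℝ) ≤ 0 :=
        le_of_tendsto_of_tendsto' hGlim hBlim (fun n => key ((n : ℝ) + 1) (by positivity))
      linarith
    obtain ⟨u₀, hu₀pos, hu₀⟩ := hA1
    -- Step 2 : the tail of Y must vanish somewhere
    have hGz : ∃ v₀ : ℝ, 1 ≤ v₀ ∧ P {ω | Y 1 ω > v₀} = 0 := by
      have h1 := hGF.def one_pos
      obtain ⟨v₀, hv₀b, hv₀ge⟩ := (h1.and (eventually_ge_atTop (max u₀ 1))).exists
      refine ⟨v₀, le_trans (le_max_right _ _) hv₀ge, ?_⟩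
      have hXz : P {ω | X 1 ω > v₀} = 0 := by
        refine measure_mono_null ?_ hu₀
        intro ω hω
        exact lt_of_le_of_lt (le_trans (le_max_left _ _) hv₀ge) hω
      rw [hXz] at hv₀b
      simp only [ENNReal.toReal_zero, norm_zero, mul_zero, Real.norm_eq_abs] at hv₀b
      have h2 : (P {ω | Y 1 ω > v₀}).toReal = 0 := le_antisymm (by simpa using hv₀b)
        ENNReal.toReal_nonneg
      rcases (ENNReal.toReal_eq_zero_iff _).mp h2 with h3 | h3
      · exact h3
      · exact absurd h3 (measure_ne_top _ _)
    obtain ⟨v₀, hv₀1, hv₀⟩ := hGz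
    -- conclude : events are eventually null
    rw [Asymptotics.isLittleO_iff]
    intro c hc
    filter_upwards [eventually_gt_atTop (x₀ * v₀ ^ m), eventually_gt_atTop 0] with x hx hx0
    have hN : P ({ω | X (m+1) ω * Y (m+1) ω > x₀}
        ∪ ⋃ i ∈ Finset.Icc 1 m, {ω | Y i ω > v₀}) = 0 := by
      apply measure_union_null
      · rw [hmXY (m+1) x₀]; exact hx₀
      · refine measure_iUnion_null fun i => ?_
        refine measure_mono_null (Set.iUnion_subset fun _ => subset_rfl) ?_
        rw [hmY i v₀]; exact hv₀
    have hPzero : P {ω | X s ω * ∏ i ∈ Finset.Icc 1 s, Y i ω > x ∧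
        X (m+1) ω * ∏ i ∈ Finset.Icc 1 (m+1), Y i ω > x} = 0 := by
      refine measure_mono_null ?_ hN
      intro ω hω
      by_contra hcon
      simp only [Set.mem_union, Set.mem_iUnion, not_or, not_exists, mem_setOf_eq,
        not_lt, exists_prop] at hcon
      obtain ⟨h1, h2⟩ := hcon
      have h2' : ∀ i ∈ Finset.Icc 1 m, Y i ω ≤ v₀ :=
        fun i hi => not_lt.mp (fun hgt => h2 i ⟨hi, hgt⟩)
      have hω2 : x < X (m+1) ω * ∏ i ∈ Finset.Icc 1 (m+1), Y i ω := hω.2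
      have hprod : ∏ i ∈ Finset.Icc 1 (m+1), Y i ω
          = (∏ i ∈ Finset.Icc 1 m, Y i ω) * Y (m+1) ω :=
        Finset.prod_Icc_succ_top (by omega) _
      have hple : ∏ i ∈ Finset.Icc 1 m, Y i ω ≤ v₀ ^ m := by
        have := Finset.prod_le_prod (s := Finset.Icc 1 m)
          (f := fun i => Y i ω) (g := fun _ => v₀)
          (fun i _ => (hYpos i ω).le) (fun i hi => h2' i hi)
        simpa [Nat.card_Icc] using this
      have hbound : X (m+1) ω * ∏ i ∈ Finset.Icc 1 (m+1), Y i ω ≤ x₀ * v₀ ^ m := by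
        rw [hprod]
        have h3 : X (m+1) ω * ((∏ i ∈ Finset.Icc 1 m, Y i ω) * Y (m+1) ω)
            = (X (m+1) ω * Y (m+1) ω) * ∏ i ∈ Finset.Icc 1 m, Y i ω := by ring
        rw [h3]
        apply mul_le_mul h1 hple
          (Finset.prod_nonneg fun i _ => (hYpos i ω).le) hx₀pos.le
      linarith
    rw [hPzero]
    simp only [ENNReal.toReal_zero, norm_zero]
    exact mul_nonneg hc.le (norm_nonneg _)
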